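/- Let l ≤ k be positive integers and let π, σ, δ, ρ be permutations such that δ ⋖_l π, ρ ⋖_l σ, δ ⋖_k ρ, and π ⋖_k σ. If δ ≠ id, assume furthermore that l ≤ d₁(δ) and k ≥ d₂(δ). Then: (a) k ≥ d₂(π) and l ≤ d₁(π); and (b) l ≤ d₁(ρ) and k ≥ d₂(ρ). (Note that π ≠ id and ρ ≠ id automatically, since each covers δ, so their first and last descents are defined.) -/

import Mathlib

/-- A permutation of the positive integers, modeled as a permutation of `ℕ`
fixing `0` (and, separately assumed, all but finitely many points). -/
def FinPerm (w : Equiv.Perm ℕ) : Prop :=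
  w 0 = 0 ∧ {i : ℕ | w i ≠ i}.Finite

/-- The length `ℓ(w)`: the number of inversions, i.e. pairs `i < j` with `w i > w j`. -/
noncomputable def len (w : Equiv.Perm ℕ) : ℕ :=
  {p : ℕ × ℕ | p.1 < p.2 ∧ w p.2 < w p.1}.ncard

/-- The set of descents: positions `i ≥ 1` with `w i > w (i+1)`. -/
def descents (w : Equiv.Perm ℕ) : Set ℕ :=
  {i : ℕ | 0 < i ∧ w (i + 1) < w i}

/-- `d₁(w)`: the first (smallest) descent of `w`. -/
noncomputable def d1 (w : Equiv.Perm ℕ) : ℕ := sInf (descents w)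

/-- `d₂(w)`: the last (largest) descent of `w`. -/
noncomputable def d2 (w : Equiv.Perm ℕ) : ℕ := sSup (descents w)

/-- `kCover k ρ π` means `ρ ⋖_k π`:  `π = ρ t_{a b}` for some positive
`a ≤ k < b`, with `ℓ(π) = ℓ(ρ) + 1`. -/
def kCover (k : ℕ) (ρ π : Equiv.Perm ℕ) : Prop :=
  ∃ a b : ℕ, 0 < a ∧ a ≤ k ∧ k < b ∧ π = ρ * Equiv.swap a b ∧ len π = len ρ + 1


-- auxiliary lemmas


def InvSet (w : Equiv.Perm ℕ) : Set (ℕ × ℕ) := {p | p.1 < p.2 ∧ w p.2 < w p.1}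

lemma len_def (w : Equiv.Perm ℕ) : len w = (InvSet w).ncard := rfl

lemma inv_finite {w : Equiv.Perm ℕ} (h : {i | w i ≠ i}.Finite) : (InvSet w).Finite := by
  obtain ⟨N, hN⟩ := h.bddAbove
  have key : ∀ m, N < m → w m = m := by
    intro m hm
    by_contra hne
    exact absurd (hN hne) (by omega)
  apply Set.Finite.subset ((Set.finite_Iio (N+1)).prod (Set.finite_Iio (N+1)))
  rintro ⟨i, j⟩ ⟨hij, hw⟩
  change i < j at hij
  change w j < w i at hw
  simp only [Set.mem_prod, Set.mem_Iio]
  have hj : j < N + 1 := by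
    by_contra hj
    push_neg at hj
    have hwj : w j = j := key j (by omega)
    have h1 : j < w i := by omega
    have h2 : w (w i) = w i := key (w i) (by omega)
    have := w.injective h2
    omega
  exact ⟨by omega, hj⟩

lemma descents_finite {w : Equiv.Perm ℕ} (h : {i | w i ≠ i}.Finite) : (descents w).Finite := by
  obtain ⟨N, hN⟩ := h.bddAbove
  have key : ∀ m, N < m → w m = m := by
    intro m hm; by_contra hne; exact absurd (hN hne) (by omega)
  apply Set.Finite.subset (Set.finite_Iio (N+1))
  rintro i ⟨hi0, hlt⟩
  simp only [Set.mem_Iio]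
  by_contra hi
  push_neg at hi
  rw [key i (by omega), key (i+1) (by omega)] at hlt
  omega

lemma descents_one : descents 1 = ∅ := by
  rw [Set.eq_empty_iff_forall_notMem]
  intro i hi
  obtain ⟨h0, hlt⟩ := hi
  simp only [Equiv.Perm.one_apply] at hlt
  omega

lemma len_one : len 1 = 0 := by
  rw [len_def]
  convert Set.ncard_empty (ℕ × ℕ)
  ext ⟨i, j⟩
  simp only [InvSet, Set.mem_setOf_eq, Set.mem_empty_iff_false, iff_false, not_and]
  intro h
  simpa using Nat.le_of_lt h

lemma eq_one_of_descents_empty {w : Equiv.Perm ℕ} (hw : FinPerm w)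
    (h : descents w = ∅) : w = 1 := by
  have mono : StrictMono w := by
    apply strictMono_nat_of_lt_succ
    intro n
    rcases Nat.eq_zero_or_pos n with hn | hn
    · subst hn
      have h1 : w (0 + 1) = w 1 := by norm_num
      have h2 : w 1 ≠ 0 := by
        intro hc
        have := w.injective (hc.trans hw.1.symm)
        omega
      rw [h1, hw.1]
      omega
    · have : n ∉ descents w := by rw [h]; exact Set.notMem_empty n
      simp only [descents, Set.mem_setOf_eq, not_and, not_lt] at this
      have hle := this hn
      have : w n ≠ w (n + 1) := fun hc => by have := w.injective hc; omega
      omega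
  have hfix : ∀ n, w n = n := by
    intro n
    induction n using Nat.strong_induction_on with
    | _ n IH =>
      have h1 : n ≤ w n := mono.le_apply
      set m := w.symm n with hm
      have hmn : w m = n := w.apply_symm_apply n
      have hmle : m ≤ n := by
        by_contra hc
        push_neg at hc
        have := mono hc
        have h2 : n ≤ w n := mono.le_apply
        omega
      rcases lt_or_eq_of_le hmle with hc | hc
      · have := IH m hc
        omega
      · rw [hc] at hmn; omega
  exact Equiv.ext fun n => hfix n

lemma pi_apply (δ : Equiv.Perm ℕ) (a b x : ℕ) :
    (δ * Equiv.swap a b) x = δ (Equiv.swap a b x) := rfl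

lemma pi_apply_of_ne (δ : Equiv.Perm ℕ) {a b x : ℕ} (h1 : x ≠ a) (h2 : x ≠ b) :
    (δ * Equiv.swap a b) x = δ x := by
  rw [pi_apply, Equiv.swap_apply_of_ne_of_ne h1 h2]

lemma pi_apply_a (δ : Equiv.Perm ℕ) (a b : ℕ) : (δ * Equiv.swap a b) a = δ b := by
  rw [pi_apply, Equiv.swap_apply_left]

lemma pi_apply_b (δ : Equiv.Perm ℕ) (a b : ℕ) : (δ * Equiv.swap a b) b = δ a := by
  rw [pi_apply, Equiv.swap_apply_right]

lemma inj_ne (δ : Equiv.Perm ℕ) {x y : ℕ} (h : x ≠ y) : δ x ≠ δ y :=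
  fun hc => h (δ.injective hc)

lemma finπ {δ : Equiv.Perm ℕ} (a b : ℕ) (hfin : {i | δ i ≠ i}.Finite) :
    {i | (δ * Equiv.swap a b) i ≠ i}.Finite := by
  have hsub : {i | (δ * Equiv.swap a b) i ≠ i} ⊆ {i | δ i ≠ i} ∪ {a, b} := by
    intro x hx
    by_cases hxa : x = a
    · right; simp [hxa]
    · by_cases hxb : x = b
      · right; simp [hxb]
      · left
        rw [Set.mem_setOf_eq] at hx ⊢
        rwa [pi_apply_of_ne δ hxa hxb] at hx
  exact Set.Finite.subset (hfin.union ((Set.finite_singleton b).insert a)) hsub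

lemma diff_char {δ : Equiv.Perm ℕ} {a b : ℕ} (hab : a < b) (hv : δ a < δ b) :
    ∀ p ∈ InvSet δ \ InvSet (δ * Equiv.swap a b),
      (p.2 = a ∧ p.1 < a ∧ δ a < δ p.1 ∧ δ p.1 < δ b) ∨
      (p.1 = b ∧ b < p.2 ∧ δ a < δ p.2 ∧ δ p.2 < δ b) := by
  rintro ⟨i, j⟩ ⟨⟨hij, hd⟩, hnp⟩
  simp only [InvSet, Set.mem_setOf_eq, not_and, not_lt] at hnp hd hij ⊢
  have hnp := hnp hij
  by_cases hja : j = a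
  · subst hja
    left
    have hib : i ≠ b := by omega
    rw [pi_apply_of_ne δ (by omega) hib, pi_apply_a] at hnp
    have : δ i ≠ δ b := inj_ne δ hib
    exact ⟨rfl, hij, hd, by omega⟩
  · by_cases hia : i = a
    · subst hia
      by_cases hjb : j = b
      · subst hjb; omega
      · rw [pi_apply_a, pi_apply_of_ne δ hja hjb] at hnp
        omega
    · by_cases hjb : j = b
      · subst hjb
        rw [pi_apply_of_ne δ hia (by omega), pi_apply_b] at hnp
        omega
      · by_cases hib : i = b
        · subst hib
          right
          rw [pi_apply_b, pi_apply_of_ne δ hja hjb] at hnp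
          have : δ j ≠ δ a := inj_ne δ hja
          exact ⟨rfl, hij, by omega, hd⟩
        · rw [pi_apply_of_ne δ hia hib, pi_apply_of_ne δ hja hjb] at hnp
          omega

lemma count_main {δ : Equiv.Perm ℕ} {a b : ℕ}
    (hfin : {i | δ i ≠ i}.Finite) (hab : a < b) (hv : δ a < δ b) :
    len δ < len (δ * Equiv.swap a b) ∧
      ∀ c, a < c → c < b → δ a < δ c → δ c < δ b →
        len δ + 1 < len (δ * Equiv.swap a b) := by
  have hfinπ := finπ a b hfin
  have hIδ : (InvSet δ).Finite := inv_finite hfin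
  have hIπ : (InvSet (δ * Equiv.swap a b)).Finite := inv_finite hfinπ
  set π := δ * Equiv.swap a b with hπ
  set S := InvSet δ \ InvSet π with hS
  set T := InvSet π \ InvSet δ with hT
  have hSfin : S.Finite := hIδ.diff
  have hTfin : T.Finite := hIπ.diff
  set g : ℕ × ℕ → ℕ × ℕ := fun p => if p.2 = a then (p.1, b) else (a, p.2) with hg
  have hchar := diff_char hab hv
  have hgp1 : ∀ p : ℕ × ℕ, p.2 = a → g p = (p.1, b) := by
    intro p hp; simp [hg, hp]
  have hgp2 : ∀ p : ℕ × ℕ, p.2 ≠ a → g p = (a, p.2) := by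
    intro p hp; simp [hg, hp]
  have hgT : ∀ p ∈ S, g p ∈ T := by
    intro p hp
    rcases hchar p hp with ⟨h1, h2, h3, h4⟩ | ⟨h1, h2, h3, h4⟩
    · rw [hgp1 p h1]
      constructor
      · refine ⟨by omega, ?_⟩
        rw [pi_apply_b, pi_apply_of_ne δ (by omega) (by omega)]
        exact h3
      · simp only [InvSet, Set.mem_setOf_eq, not_and, not_lt]
        intro _; omega
    · rw [hgp2 p (by omega)]
      constructor
      · refine ⟨by omega, ?_⟩
        rw [pi_apply_a, pi_apply_of_ne δ (by omega) (by omega)]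
        exact h4
      · simp only [InvSet, Set.mem_setOf_eq, not_and, not_lt]
        intro _; omega
  have hinj : Set.InjOn g S := by
    intro p hp q hq hpq
    rcases hchar p hp with ⟨h1, h2, h3, h4⟩ | ⟨h1, h2, h3, h4⟩ <;>
      rcases hchar q hq with ⟨k1, k2, k3, k4⟩ | ⟨k1, k2, k3, k4⟩
    · rw [hgp1 p h1, hgp1 q k1, Prod.mk.injEq] at hpq
      exact Prod.ext hpq.1 (h1.trans k1.symm)
    · rw [hgp1 p h1, hgp2 q (by omega), Prod.mk.injEq] at hpq
      omega
    · rw [hgp2 p (by omega), hgp1 q k1, Prod.mk.injEq] at hpq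
      omega
    · rw [hgp2 p (by omega), hgp2 q (by omega), Prod.mk.injEq] at hpq
      exact Prod.ext (h1.trans k1.symm) hpq.2
  have habT : (a, b) ∈ T := by
    constructor
    · exact ⟨hab, by rw [pi_apply_a, pi_apply_b]; exact hv⟩
    · simp only [InvSet, Set.mem_setOf_eq, not_and, not_lt]
      intro _; omega
  have habg : (a, b) ∉ g '' S := by
    rintro ⟨p, hp, hgp⟩
    rcases hchar p hp with ⟨h1, h2, h3, h4⟩ | ⟨h1, h2, h3, h4⟩
    · rw [hgp1 p h1, Prod.mk.injEq] at hgp; omega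
    · rw [hgp2 p (by omega), Prod.mk.injEq] at hgp; omega
  have hcard1 : S.ncard + 1 ≤ T.ncard := by
    have e1 : (insert (a,b) (g '' S)).ncard = S.ncard + 1 := by
      rw [Set.ncard_insert_of_notMem habg (hSfin.image g),
        Set.ncard_image_of_injOn hinj]
    have hsub : insert (a,b) (g '' S) ⊆ T := by
      rintro x (rfl | ⟨p, hp, rfl⟩)
      · exact habT
      · exact hgT p hp
    calc S.ncard + 1 = (insert (a,b) (g '' S)).ncard := e1.symm
      _ ≤ T.ncard := Set.ncard_le_ncard hsub hTfin
  have hlenδ : (InvSet δ ∩ InvSet π).ncard + S.ncard = len δ :=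
    Set.ncard_inter_add_ncard_diff_eq_ncard (InvSet δ) (InvSet π) hIδ
  have hlenπ : (InvSet π ∩ InvSet δ).ncard + T.ncard = len π :=
    Set.ncard_inter_add_ncard_diff_eq_ncard (InvSet π) (InvSet δ) hIπ
  have hcomm : (InvSet δ ∩ InvSet π).ncard = (InvSet π ∩ InvSet δ).ncard := by
    rw [Set.inter_comm]
  simp only [len_def] at hlenδ hlenπ ⊢
  constructor
  · omega
  · intro c hac hcb h3 h4
    have hcT : (a, c) ∈ T := by
      constructor
      · refine ⟨hac, ?_⟩
        rw [pi_apply_a, pi_apply_of_ne δ (by omega) (by omega)]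
        exact h4
      · simp only [InvSet, Set.mem_setOf_eq, not_and, not_lt]
        intro _; omega
    have hcT2 : (c, b) ∈ T := by
      constructor
      · refine ⟨hcb, ?_⟩
        rw [pi_apply_b, pi_apply_of_ne δ (by omega) (by omega)]
        exact h3
      · simp only [InvSet, Set.mem_setOf_eq, not_and, not_lt]
        intro _; omega
    have hcg : (a, c) ∉ g '' S := by
      rintro ⟨p, hp, hgp⟩
      rcases hchar p hp with ⟨h1', h2', _, _⟩ | ⟨h1', h2', _, _⟩
      · rw [hgp1 p h1', Prod.mk.injEq] at hgp; omega
      · rw [hgp2 p (by omega), Prod.mk.injEq] at hgp; omega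
    have hcg2 : (c, b) ∉ g '' S := by
      rintro ⟨p, hp, hgp⟩
      rcases hchar p hp with ⟨h1', h2', _, _⟩ | ⟨h1', h2', _, _⟩
      · rw [hgp1 p h1', Prod.mk.injEq] at hgp; omega
      · rw [hgp2 p (by omega), Prod.mk.injEq] at hgp; omega
    have hcard3 : S.ncard + 3 ≤ T.ncard := by
      have hsub : insert (a,c) (insert (c,b) (insert (a,b) (g '' S))) ⊆ T := by
        rintro x (rfl | rfl | rfl | ⟨p, hp, rfl⟩)
        · exact hcT
        · exact hcT2
        · exact habT
        · exact hgT p hp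
      have e1 : (insert (a,b) (g '' S)).ncard = S.ncard + 1 := by
        rw [Set.ncard_insert_of_notMem habg (hSfin.image g),
          Set.ncard_image_of_injOn hinj]
      have e2 : (insert (c,b) (insert (a,b) (g '' S))).ncard = S.ncard + 2 := by
        rw [Set.ncard_insert_of_notMem _ ((hSfin.image g).insert _), e1]
        rintro (h | h)
        · rw [Prod.mk.injEq] at h; omega
        · exact hcg2 h
      have e3 : (insert (a,c) (insert (c,b) (insert (a,b) (g '' S)))).ncard
          = S.ncard + 3 := by
        rw [Set.ncard_insert_of_notMem _ (((hSfin.image g).insert _).insert _), e2]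
        rintro (h | h | h)
        · rw [Prod.mk.injEq] at h; omega
        · rw [Prod.mk.injEq] at h; omega
        · exact hcg h
      calc S.ncard + 3 = _ := e3.symm
        _ ≤ T.ncard := Set.ncard_le_ncard hsub hTfin
    omega

lemma cover_props {δ π : Equiv.Perm ℕ} {a b : ℕ} (hδ : {i | δ i ≠ i}.Finite)
    (hab : a < b) (heq : π = δ * Equiv.swap a b) (hlen : len π = len δ + 1) :
    δ a < δ b ∧ ∀ c, a < c → c < b → ¬(δ a < δ c ∧ δ c < δ b) := by
  have hvab : δ a < δ b := by
    rcases lt_trichotomy (δ a) (δ b) with h | h | h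
    · exact h
    · exact absurd (δ.injective h) (by omega)
    · exfalso
      have hπfin : {i | π i ≠ i}.Finite := heq ▸ finπ a b hδ
      have hδeq : δ = π * Equiv.swap a b := by
        rw [heq, mul_assoc, Equiv.swap_mul_self, mul_one]
      have hva : π a < π b := by
        rw [heq, pi_apply_a, pi_apply_b]; exact h
      have := (count_main hπfin hab hva).1
      rw [← hδeq] at this
      omega
  refine ⟨hvab, ?_⟩
  rintro c hac hcb ⟨h3, h4⟩
  have := (count_main hδ hab hvab).2 c hac hcb h3 h4
  rw [← heq] at this
  omega

lemma descent_transfer {δ : Equiv.Perm ℕ} {a b : ℕ} (hab : a < b) (hv : δ a < δ b)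
    (hM : ∀ c, a < c → c < b → ¬(δ a < δ c ∧ δ c < δ b)) {i : ℕ}
    (hi : i ∈ descents (δ * Equiv.swap a b)) :
    i ∈ descents δ ∨ (i = a ∧ b = a + 1) := by
  obtain ⟨hi0, hlt⟩ := hi
  by_cases hia : i = a
  · subst hia
    by_cases hb1 : i + 1 = b
    · right; exact ⟨rfl, hb1.symm⟩
    · left
      rw [pi_apply_a, pi_apply_of_ne δ (by omega) hb1] at hlt
      have h1 : δ (i+1) ≠ δ i := inj_ne δ (by omega)
      have h2 := hM (i+1) (by omega) (by omega)
      exact ⟨hi0, by omega⟩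
  · by_cases hib : i = b
    · subst hib
      left
      rw [pi_apply_b, pi_apply_of_ne δ (by omega) (by omega)] at hlt
      exact ⟨hi0, by omega⟩
    · by_cases h1a : i + 1 = a
      · left
        rw [pi_apply_of_ne δ hia hib] at hlt
        rw [show (i+1 : ℕ) = a from h1a, pi_apply_a] at hlt
        refine ⟨hi0, ?_⟩
        rw [h1a]
        omega
      · by_cases h1b : i + 1 = b
        · left
          rw [pi_apply_of_ne δ hia hib] at hlt
          rw [show (i+1 : ℕ) = b from h1b, pi_apply_b] at hlt
          have hai : a < i := by omega
          have h2 := hM i hai (by omega)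
          have h3 : δ i ≠ δ b := inj_ne δ hib
          refine ⟨hi0, ?_⟩
          rw [h1b]
          omega
        · left
          rw [pi_apply_of_ne δ hia hib, pi_apply_of_ne δ h1a h1b] at hlt
          exact ⟨hi0, hlt⟩

lemma descents_bound {δ π : Equiv.Perm ℕ} {a b l k m : ℕ}
    (hδfin : {i | δ i ≠ i}.Finite)
    (ham : a ≤ m) (hmb : m < b) (hlm : l ≤ m) (hmk : m ≤ k)
    (heq : π = δ * Equiv.swap a b) (hlen : len π = len δ + 1)
    (hδd : descents δ ⊆ Set.Icc l k) :
    descents π ⊆ Set.Icc l k := by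
  have hab : a < b := by omega
  obtain ⟨hv, hM⟩ := cover_props hδfin hab heq hlen
  intro i hi
  rw [heq] at hi
  rcases descent_transfer hab hv hM hi with h | ⟨h1, h2⟩
  · exact hδd h
  · have : a = m := by omega
    simp only [Set.mem_Icc]
    omega


/-- Lemma on a single square of a growth diagram (Lemma 4.1). -/
theorem stmt0 (l k : ℕ) (hl : 0 < l) (hlk : l ≤ k)
    (π σ δ ρ : Equiv.Perm ℕ)
    (hπ : FinPerm π) (hσ : FinPerm σ) (hδ : FinPerm δ) (hρ : FinPerm ρ)
    (h1 : kCover l δ π) (h2 : kCover l ρ σ)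
    (h3 : kCover k δ ρ) (h4 : kCover k π σ)
    (hdesc : δ ≠ 1 → l ≤ d1 δ ∧ d2 δ ≤ k) :
    (d2 π ≤ k ∧ l ≤ d1 π) ∧ (l ≤ d1 ρ ∧ d2 ρ ≤ k) := by
  have hδd : descents δ ⊆ Set.Icc l k := by
    by_cases hδ1 : δ = 1
    · rw [hδ1, descents_one]; exact Set.empty_subset _
    · obtain ⟨hd1, hd2⟩ := hdesc hδ1
      intro i hi
      have hfin := descents_finite hδ.2
      have hle : i ≤ d2 δ := le_csSup hfin.bddAbove hi
      have hge : d1 δ ≤ i := Nat.sInf_le hi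
      simp only [Set.mem_Icc]
      omega
  have key : ∀ w : Equiv.Perm ℕ, FinPerm w → kCover l δ w ∨ kCover k δ w →
      l ≤ d1 w ∧ d2 w ≤ k := by
    intro w hw hcov
    have hbound : descents w ⊆ Set.Icc l k := by
      rcases hcov with ⟨a, b, ha, hal, hlb, heq, hlen⟩ | ⟨a, b, ha, hak, hkb, heq, hlen⟩
      · exact descents_bound hδ.2 hal hlb le_rfl hlk heq hlen hδd
      · exact descents_bound hδ.2 hak hkb hlk le_rfl heq hlen hδd
    have hwne : w ≠ 1 := by
      intro hc
      have hlw : len w = 0 := by rw [hc]; exact len_one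
      rcases hcov with ⟨_, _, _, _, _, _, hlen⟩ | ⟨_, _, _, _, _, _, hlen⟩ <;> omega
    have hne : (descents w).Nonempty := by
      rcases Set.eq_empty_or_nonempty (descents w) with h | h
      · exact absurd (eq_one_of_descents_empty hw h) hwne
      · exact h
    have hfin := descents_finite hw.2
    have hmem1 : d1 w ∈ descents w := Nat.sInf_mem hne
    have hmem2 : d2 w ∈ descents w := hne.csSup_mem hfin
    have b1 := hbound hmem1
    have b2 := hbound hmem2
    simp only [Set.mem_Icc] at b1 b2
    exact ⟨b1.1, b2.2⟩
  obtain ⟨p1, p2⟩ := key π hπ (Or.inl h1)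
  obtain ⟨r1, r2⟩ := key ρ hρ (Or.inr h3)
  exact ⟨⟨p2, p1⟩, ⟨r1, r2⟩⟩
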